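/- Let Ē, Ā be n×n selective structural patterns and Ā^λ = Ā − λĒ. Suppose there exist an ordering τ₁,…,τₙ of the columns of Ā^λ, positions 1 ≤ i₁ < ⋯ < i_{k'} ≤ n, and distinct rows r₁,…,r_{k'} such that Ā^λ_{r_t, τ_{i_t}} = × for every t and Ā^λ_{r_t, τ_s} = 0 for every s < i_t (the columns τ_{i₁},…,τ_{i_{k'}} are the pivot columns). Let J = {τ_s : s ∈ {1,…,n} ∖ {i₁,…,i_{k'}}} be the set of non-pivot columns. Then the dedicated output pattern C̄* = 𝕀_n^r(J), consisting of n − k' dedicated sensors measuring the states indexed by the non-pivot columns, renders (Ē, Ā, C̄*) SSSO. -/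

import Mathlib

inductive Pat : Type
  | zero : Pat
  | cross : Pat
  | any : Pat
deriving DecidableEq

/-- `X` is a realization of the selective structural pattern `Xbar`:
zero entries are zero, cross entries are nonzero, `any` entries are arbitrary. -/
def IsRealization {α β F : Type*} [Zero F]
    (Xbar : Matrix α β Pat) (X : Matrix α β F) : Prop :=
  ∀ i j, (Xbar i j = Pat.zero → X i j = 0) ∧ (Xbar i j = Pat.cross → X i j ≠ 0)

/-- The complexification of a real matrix. -/
noncomputable def toC {α β : Type*} (X : Matrix α β ℝ) : Matrix α β ℂ :=
  X.map Complex.ofReal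

/-- The pencil `A - λ E` is regular, i.e. `det (A - λ E)` is not identically zero. -/
def RegularPencil {n : ℕ} (E A : Matrix (Fin n) (Fin n) ℝ) : Prop :=
  ∃ μ : ℂ, (toC A - μ • toC E).det ≠ 0

/-- Selective strong structural controllability. -/
def SSSC {n : ℕ} {p : Type*} [Fintype p]
    (Ebar Abar : Matrix (Fin n) (Fin n) Pat) (Bbar : Matrix (Fin n) p Pat) : Prop :=
  ∀ (E A : Matrix (Fin n) (Fin n) ℝ) (B : Matrix (Fin n) p ℝ),
    IsRealization Ebar E → IsRealization Abar A → RegularPencil E A →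
    IsRealization Bbar B →
    ∀ lam : ℂ, (Matrix.fromCols (toC A - lam • toC E) (toC B)).rank = n

/-- Selective strong structural observability. -/
def SSSO {n : ℕ} {m : Type*} [Fintype m]
    (Ebar Abar : Matrix (Fin n) (Fin n) Pat) (Cbar : Matrix m (Fin n) Pat) : Prop :=
  ∀ (E A : Matrix (Fin n) (Fin n) ℝ) (C : Matrix m (Fin n) ℝ),
    IsRealization Ebar E → IsRealization Abar A → RegularPencil E A →
    IsRealization Cbar C →
    ∀ lam : ℂ, (Matrix.fromRows (toC A - lam • toC E) (toC C)).rank = n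

/-- A pattern with no `⊗` entries, i.e. a `{0,×}`-pattern. -/
def ZeroCross {α β : Type*} (X : Matrix α β Pat) : Prop :=
  ∀ i j, X i j ≠ Pat.any

/-- Number of `×` entries of a pattern. -/
def crossCount {α β : Type*} [Fintype α] [Fintype β] (X : Matrix α β Pat) : ℕ :=
  ∑ i, ∑ j, if X i j = Pat.cross then 1 else 0

/-- The pattern `Ā - λ Ē`. -/
def patLam {n : ℕ} (Ebar Abar : Matrix (Fin n) (Fin n) Pat) :
    Matrix (Fin n) (Fin n) Pat :=
  Matrix.of fun i j =>
    match Abar i j, Ebar i j with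
    | Pat.cross, Pat.zero => Pat.cross
    | Pat.zero, Pat.zero => Pat.zero
    | _, _ => Pat.any


lemma patLam_cross_iff {n : ℕ} (Ebar Abar : Matrix (Fin n) (Fin n) Pat) (i j : Fin n)
    (h : patLam Ebar Abar i j = Pat.cross) :
    Abar i j = Pat.cross ∧ Ebar i j = Pat.zero := by
  cases hA : Abar i j <;> cases hE : Ebar i j <;>
    simp_all [patLam]

lemma patLam_zero_iff {n : ℕ} (Ebar Abar : Matrix (Fin n) (Fin n) Pat) (i j : Fin n)
    (h : patLam Ebar Abar i j = Pat.zero) :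
    Abar i j = Pat.zero ∧ Ebar i j = Pat.zero := by
  cases hA : Abar i j <;> cases hE : Ebar i j <;>
    simp_all [patLam]

lemma rank_eq_of_ker {n : ℕ} {α : Type*} [Fintype α]
    (M : Matrix α (Fin n) ℂ)
    (h : ∀ x : Fin n → ℂ, M.mulVec x = 0 → x = 0) : M.rank = n := by
  have hker : LinearMap.ker M.mulVecLin = ⊥ :=
    LinearMap.ker_eq_bot'.2 (fun x hx => h x hx)
  have := LinearMap.finrank_range_add_finrank_ker M.mulVecLin
  rw [hker, finrank_bot, add_zero, Module.finrank_fin_fun] at this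
  simpa [Matrix.rank] using this

/-- given a (column-sided) ramp certificate of `Ā^λ` (column ordering `τ`,
pivot positions `ip`, pivot rows `r`), placing dedicated sensors at the non-pivot
columns `{τ s : s ∉ range ip}` (padded with zero rows) yields an SSSO triple. -/
theorem dedicated_solution_SSSO {n k' : ℕ}
    (Ebar Abar : Matrix (Fin n) (Fin n) Pat)
    (τ : Equiv.Perm (Fin n))
    (ip : Fin k' → Fin n) (hip : StrictMono ip)
    (r : Fin k' → Fin n) (hr : Function.Injective r)
    (hpiv : ∀ t, patLam Ebar Abar (r t) (τ (ip t)) = Pat.cross)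
    (hzero : ∀ (t : Fin k') (s : Fin n), s < ip t →
      patLam Ebar Abar (r t) (τ s) = Pat.zero) :
    SSSO Ebar Abar
      (Matrix.of fun s j : Fin n =>
        if (∀ t, ip t ≠ s) ∧ j = τ s then Pat.cross else Pat.zero) := by
  intro E A C hE hA _hreg hC lam
  set M : Matrix (Fin n) (Fin n) ℂ := toC A - lam • toC E with hMdef
  apply rank_eq_of_ker
  intro x hx
  rw [Matrix.fromRows_mulVec] at hx
  have hxM : M.mulVec x = 0 := by
    funext i; exact congrFun hx (Sum.inl i)
  have hxC : (toC C).mulVec x = 0 := by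
    funext i; exact congrFun hx (Sum.inr i)
  -- entries of M
  have hMzero : ∀ i j, patLam Ebar Abar i j = Pat.zero → M i j = 0 := by
    intro i j h
    obtain ⟨hA0, hE0⟩ := patLam_zero_iff Ebar Abar i j h
    have h1 : A i j = 0 := (hA i j).1 hA0
    have h2 : E i j = 0 := (hE i j).1 hE0
    simp [hMdef, toC, h1, h2]
  have hMcross : ∀ i j, patLam Ebar Abar i j = Pat.cross → M i j ≠ 0 := by
    intro i j h
    obtain ⟨hAc, hE0⟩ := patLam_cross_iff Ebar Abar i j h
    have h1 : A i j ≠ 0 := (hA i j).2 hAc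
    have h2 : E i j = 0 := (hE i j).1 hE0
    simp [hMdef, toC, h2, Complex.ofReal_ne_zero, h1]
  -- the key downward induction
  have key : ∀ N : ℕ, ∀ s : Fin n, n - s.val ≤ N → x (τ s) = 0 := by
    intro N
    induction N with
    | zero => intro s hs; omega
    | succ N ih =>
      intro s _
      have IH : ∀ s' : Fin n, s < s' → x (τ s') = 0 := by
        intro s' hlt
        exact ih s' (by omega)
      by_cases hpv : ∃ t, ip t = s
      · obtain ⟨t, ht⟩ := hpv
        have hrow : M.mulVec x (r t) = 0 := congrFun hxM (r t)
        have hsum : ∑ s' : Fin n, M (r t) (τ s') * x (τ s') = 0 := by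
          rw [← hrow]
          rw [Matrix.mulVec, dotProduct]
          exact Fintype.sum_equiv τ _ _ (fun s' => rfl)
        have hsingle : ∑ s' : Fin n, M (r t) (τ s') * x (τ s') =
            M (r t) (τ s) * x (τ s) := by
          apply Finset.sum_eq_single s
          · intro s' _ hne
            rcases lt_trichotomy s' s with hlt | heq | hgt
            · rw [hMzero _ _ (hzero t s' (ht ▸ hlt))]; ring
            · exact absurd heq hne
            · rw [IH s' hgt]; ring
          · intro h; exact absurd (Finset.mem_univ s) h
        have hco : M (r t) (τ s) ≠ 0 := ht ▸ hMcross _ _ (hpiv t)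
        have := hsingle ▸ hsum
        exact (mul_eq_zero.1 this).resolve_left hco
      · push_neg at hpv
        have hrow : (toC C).mulVec x s = 0 := congrFun hxC s
        rw [Matrix.mulVec, dotProduct] at hrow
        have hCz : ∀ j, j ≠ τ s → C s j = 0 := by
          intro j hj
          exact (hC s j).1 (if_neg (by rintro ⟨-, rfl⟩; exact hj rfl))
        have hsingle : ∑ j : Fin n, toC C s j * x j = toC C s (τ s) * x (τ s) := by
          apply Finset.sum_eq_single (τ s)
          · intro j _ hne
            simp [toC, hCz j hne]
          · intro h; exact absurd (Finset.mem_univ _) h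
        have hcross : C s (τ s) ≠ 0 := by
          exact (hC s (τ s)).2 (if_pos ⟨hpv, rfl⟩)
        have hco : toC C s (τ s) ≠ 0 := by
          simpa [toC, Complex.ofReal_ne_zero] using hcross
        rw [hsingle] at hrow
        exact (mul_eq_zero.1 hrow).resolve_left hco
  funext j
  have := key n (τ.symm j) (by omega)
  simpa using this
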